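/- Let p be a prime, h ≥ 1, b_ℓ = (p^{2ℓ+1}+1)/(p+1), and B(j) = Σ_{ℓ=1}^{h} a_ℓ b_{ℓ-1} p^{h-ℓ} where j = Σ a_ℓ p^{ℓ-1} in base p. Then p^h does not divide B(j) for any 1 ≤ j ≤ p^h - 1. -/

import Mathlib

/-- with `b ℓ = (p^(2ℓ+1)+1)/(p+1)` and `B` the digit-weighted sum,
`p^h` does not divide `B j` for any `1 ≤ j ≤ p^h - 1`. -/
theorem stmt_6 (p : ℕ) (hp : p.Prime) (h : ℕ) (hh : 1 ≤ h)
    (b : ℕ → ℕ) (hb : ∀ ℓ, b ℓ = (p ^ (2 * ℓ + 1) + 1) / (p + 1))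
    (B : ℕ → ℕ)
    (hB : ∀ j, B j = ∑ ℓ ∈ Finset.range h, ((j / p ^ ℓ) % p) * b ℓ * p ^ (h - 1 - ℓ))
    (j : ℕ) (hj1 : 1 ≤ j) (hj2 : j ≤ p ^ h - 1) :
    ¬ (p ^ h ∣ B j) := by
  intro hdvd
  have hp2 : 2 ≤ p := hp.two_le
  have hj0 : j ≠ 0 := by omega
  have hjlt : j < p ^ h := by
    have : 0 < p ^ h := Nat.pow_pos (by omega)
    omega
  set L := Nat.log p j with hLdef
  have hL : L < h := Nat.log_lt_of_lt_pow hj0 hjlt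
  have hpL : p ^ L ≤ j := Nat.pow_log_le_self p hj0
  have hjltL : j < p ^ (L + 1) := Nat.lt_pow_succ_log_self (by omega) j
  -- the digit at L
  have hdigL_lt : j / p ^ L < p := Nat.div_lt_of_lt_mul (by
    calc j < p ^ (L + 1) := hjltL
    _ = p ^ L * p := by ring)
  have hdigL : (j / p ^ L) % p = j / p ^ L := Nat.mod_eq_of_lt hdigL_lt
  have hdigL_pos : 0 < j / p ^ L := Nat.one_le_div_iff (show 0 < p ^ L from Nat.pow_pos (by omega)) |>.mpr hpL
  -- digits above L vanish
  have hdig_hi : ∀ ℓ, L < ℓ → (j / p ^ ℓ) % p = 0 := by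
    intro ℓ hℓ
    have : j / p ^ ℓ = 0 := by
      apply Nat.div_eq_of_lt
      calc j < p ^ (L + 1) := hjltL
      _ ≤ p ^ ℓ := Nat.pow_le_pow_right (by omega) (by omega)
    simp [this]
  -- b L is not divisible by p
  have hbdvd : p + 1 ∣ p ^ (2 * L + 1) + 1 := by
    simpa using (Odd.nat_add_dvd_pow_add_pow p 1 (n := 2 * L + 1) ⟨L, by ring⟩)
  have hbmul : b L * (p + 1) = p ^ (2 * L + 1) + 1 := by
    rw [hb L]; exact Nat.div_mul_cancel hbdvd
  have hpbL : ¬ p ∣ b L := by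
    intro hd
    have h1 : p ∣ p ^ (2 * L + 1) + 1 := by
      rw [← hbmul]; exact hd.mul_right _
    have h2 : p ∣ p ^ (2 * L + 1) := dvd_pow_self p (by omega)
    have : p ∣ 1 := (Nat.dvd_add_right h2).mp h1
    have := Nat.le_of_dvd one_pos this
    omega
  -- split sum
  have hsplit : B j = (∑ ℓ ∈ Finset.range L, ((j / p ^ ℓ) % p) * b ℓ * p ^ (h - 1 - ℓ))
      + (j / p ^ L) * b L * p ^ (h - 1 - L) := by
    rw [hB j]
    conv_rhs => rw [← hdigL]
    rw [← Finset.sum_range_succ (fun ℓ => ((j / p ^ ℓ) % p) * b ℓ * p ^ (h - 1 - ℓ)) L]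
    symm
    apply Finset.sum_subset
    · intro x hx; simp at hx ⊢; omega
    · intro x hx hx'
      simp at hx hx'
      rw [hdig_hi x (by omega)]
      ring
  -- p^(h-L) divides the tail sum and B j, hence the L-term
  have hdvd1 : p ^ (h - L) ∣ ∑ ℓ ∈ Finset.range L, ((j / p ^ ℓ) % p) * b ℓ * p ^ (h - 1 - ℓ) := by
    apply Finset.dvd_sum
    intro ℓ hℓ
    simp at hℓ
    exact Dvd.dvd.mul_left (Nat.pow_dvd_pow p (by omega)) _
  have hdvd2 : p ^ (h - L) ∣ B j := dvd_trans (Nat.pow_dvd_pow p (by omega)) hdvd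
  have hdvd3 : p ^ (h - L) ∣ (j / p ^ L) * b L * p ^ (h - 1 - L) := by
    rw [hsplit] at hdvd2
    exact (Nat.dvd_add_right hdvd1).mp hdvd2
  have hkey : p ∣ (j / p ^ L) * b L := by
    have heq : h - L = (h - 1 - L) + 1 := by omega
    rw [heq, pow_succ] at hdvd3
    have hne : (p : ℕ) ^ (h - 1 - L) ≠ 0 := by positivity
    rw [mul_comm (p ^ (h - 1 - L)) p] at hdvd3
    exact (mul_dvd_mul_iff_right hne).mp hdvd3
  rcases (hp.dvd_mul.mp hkey) with hd | hd
  · have := Nat.le_of_dvd hdigL_pos hd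
    omega
  · exact hpbL hd
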